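/- Let β > 1 be an algebraic number with a conjugate γ satisfying |γ| > 1, and let σ : ℚ(β) → ℂ be the field embedding sending β to γ. Suppose (x_m) is a sequence in ℚ(β) satisfying x_{m+1} = β x_m - c_{m+1} with integers c_{m+1} ∈ [0, ⌊β⌋]. If for some k we have |σ(x_k)| > ⌊β⌋/(|γ| - 1), then the sequence (|σ(x_m)|) is strictly increasing for m ≥ k and diverges to infinity. -/

import Mathlib

/-- Let `β > 1` be a real algebraic number and `γ` a conjugate of `β` (a root of
a common irreducible rational polynomial) with `|γ| > 1`.  Suppose `(x_m)` is a
sequence in `ℚ(β)` with `x_{m+1} = β x_m - c_{m+1}` for integer digits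
`0 ≤ c_m ≤ ⌊β⌋`, and let `v_m = σ(x_m)` be its image under the embedding
`σ : ℚ(β) → ℂ` with `σ(β) = γ`, so that `v_{m+1} = γ v_m - c_{m+1}`.
If `|v_k| > ⌊β⌋/(|γ| - 1)` for some `k`, then `(|v_m|)` is strictly increasing
for `m ≥ k` and diverges to infinity. -/
theorem conjugate_orbit_diverges (β : ℝ) (hβ : 1 < β) (γ : ℂ)
    (hγ : 1 < ‖γ‖)
    (p : Polynomial ℚ) (hp : Irreducible p)
    (hpβ : Polynomial.aeval β p = 0) (hpγ : Polynomial.aeval γ p = 0)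
    (c : ℕ → ℤ) (hc : ∀ m, 0 ≤ c m ∧ c m ≤ ⌊β⌋)
    (v : ℕ → ℂ) (hv : ∀ m, v (m + 1) = γ * v m - c (m + 1))
    (k : ℕ) (hk : (⌊β⌋ : ℝ) / (‖γ‖ - 1) < ‖v k‖) :
    StrictMonoOn (fun m => ‖v m‖) {m | k ≤ m} ∧
      Filter.Tendsto (fun m => ‖v m‖) Filter.atTop Filter.atTop := by
  set B : ℝ := (⌊β⌋ : ℝ) with hB
  set L : ℝ := B / (‖γ‖ - 1) with hL
  have hγ1 : (0:ℝ) < ‖γ‖ - 1 := by linarith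
  have hB0 : 0 ≤ B := by
    have h1 : (1:ℤ) ≤ ⌊β⌋ := Int.le_floor.mpr (by norm_num; linarith)
    have : (1:ℝ) ≤ B := by rw [hB]; exact_mod_cast h1
    linarith
  have hLB : L * (‖γ‖ - 1) = B := div_mul_cancel₀ B (ne_of_gt hγ1)
  have hL0 : 0 ≤ L := div_nonneg hB0 (le_of_lt hγ1)
  -- key step inequality
  have key : ∀ m, ‖γ‖ * ‖v m‖ - B ≤ ‖v (m + 1)‖ := by
    intro m
    have h1 : ‖(c (m+1) : ℂ)‖ ≤ B := by
      rw [Complex.norm_intCast]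
      have h := hc (m+1)
      have : |(c (m+1) : ℝ)| = (c (m+1) : ℝ) := abs_of_nonneg (by exact_mod_cast h.1)
      rw [this, hB]; exact_mod_cast h.2
    have h2 : ‖γ * v m‖ ≤ ‖v (m+1)‖ + ‖(c (m+1):ℂ)‖ := by
      have : γ * v m = v (m+1) + (c (m+1):ℂ) := by rw [hv m]; ring
      rw [this]; exact norm_add_le _ _
    have h3 : ‖γ * v m‖ = ‖γ‖ * ‖v m‖ := norm_mul _ _
    linarith
  set ε : ℝ := ‖v k‖ - L with hε
  have hε0 : 0 < ε := by simp only [hε]; linarith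
  -- growth estimate
  have grow : ∀ n, L + (‖γ‖)^n * ε ≤ ‖v (k + n)‖ := by
    intro n
    induction n with
    | zero => simp [hε]
    | succ n ih =>
      have hk1 := key (k + n)
      have hγ0 : (0:ℝ) ≤ ‖γ‖ := by positivity
      have : ‖γ‖ * (L + (‖γ‖)^n * ε) ≤ ‖γ‖ * ‖v (k+n)‖ :=
        mul_le_mul_of_nonneg_left ih hγ0
      have heq : ‖γ‖ * L - B = L := by nlinarith [hLB]
      have : L + (‖γ‖)^(n+1) * ε ≤ ‖γ‖ * ‖v (k+n)‖ - B := by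
        nlinarith [pow_succ (‖γ‖) n]
      calc L + (‖γ‖)^(n+1) * ε ≤ ‖γ‖ * ‖v (k+n)‖ - B := this
        _ ≤ ‖v (k + n + 1)‖ := hk1
  have hgt : ∀ m, k ≤ m → L < ‖v m‖ := by
    intro m hm
    obtain ⟨n, rfl⟩ := Nat.exists_eq_add_of_le hm
    have h1 : (1:ℝ) ≤ (‖γ‖)^n := one_le_pow₀ (le_of_lt hγ)
    have := grow n
    nlinarith
  have step : ∀ m, k ≤ m → ‖v m‖ < ‖v (m + 1)‖ := by
    intro m hm
    have h1 := hgt m hm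
    have h2 := key m
    nlinarith
  constructor
  · intro a ha b hb hab
    simp only [Set.mem_setOf_eq] at ha hb
    induction b with
    | zero => omega
    | succ b ih =>
      rcases Nat.lt_or_ge a b with h | h
      · have hb' : k ≤ b := le_trans ha (le_of_lt h)
        exact lt_trans (ih h hb') (step b hb')
      · have : a = b := by omega
        subst this
        exact step a ha
  · have hmono : Filter.Tendsto (fun n : ℕ => L + (‖γ‖)^(n - k) * ε)
        Filter.atTop Filter.atTop := by
      apply Filter.tendsto_atTop_add_const_left
      apply Filter.Tendsto.atTop_mul_const hε0
      exact (tendsto_pow_atTop_atTop_of_one_lt hγ).comp (Filter.tendsto_sub_atTop_nat k)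
    apply Filter.tendsto_atTop_mono' _ _ hmono
    filter_upwards [Filter.eventually_ge_atTop k] with m hm
    have := grow (m - k)
    rwa [Nat.add_sub_cancel' hm] at this
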